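/- Let X be a metric space and (x, y) a configuration in X. If (x, y) is midpoint secure with finite midpoint blocking set B, then (x, y) is secure; moreover the finite set B ∖ {x, y} is a blocking set for the collection of all geodesics joining x to y. -/

import Mathlib

/-- A map `γ : ℝ → X` (viewed on `[0,1]`) is a geodesic with speed `L` if `L > 0` and
every `t ∈ [0,1]` has a neighborhood `U ⊆ ℝ` on which `γ` is a local isometry up to
the factor `L`: `dist (γ s) (γ s') = L * |s - s'|` for `s, s' ∈ U ∩ [0,1]`. -/
def IsGeodesicWithSpeed {X : Type*} [MetricSpace X] (γ : ℝ → X) (L : ℝ) : Prop :=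
  0 < L ∧ ∀ t ∈ Set.Icc (0:ℝ) 1, ∃ U ∈ nhds t,
    ∀ s ∈ U ∩ Set.Icc (0:ℝ) 1, ∀ s' ∈ U ∩ Set.Icc (0:ℝ) 1,
      dist (γ s) (γ s') = L * |s - s'|

/-- A geodesic is a map with some positive speed. -/
def IsGeodesic {X : Type*} [MetricSpace X] (γ : ℝ → X) : Prop :=
  ∃ L : ℝ, IsGeodesicWithSpeed γ L

/-- `B` is a blocking set for the configuration `(x, y)`: every geodesic joining `x` to `y`
has an interior point in `B`. -/
def Blocks {X : Type*} [MetricSpace X] (x y : X) (B : Set X) : Prop :=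
  ∀ γ : ℝ → X, IsGeodesic γ → γ 0 = x → γ 1 = y → ∃ t ∈ Set.Ioo (0:ℝ) 1, γ t ∈ B

/-- The configuration `(x, y)` is secure: it has a finite blocking set. -/
def Secure {X : Type*} [MetricSpace X] (x y : X) : Prop :=
  ∃ B : Set X, B.Finite ∧ Blocks x y B

/-- `B` is a midpoint blocking set for `(x, y)`: every geodesic joining `x` to `y`
has its midpoint in `B`. -/
def MidpointBlocks {X : Type*} [MetricSpace X] (x y : X) (B : Set X) : Prop :=
  ∀ γ : ℝ → X, IsGeodesic γ → γ 0 = x → γ 1 = y → γ (1/2 : ℝ) ∈ B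

/-- The configuration `(x, y)` is midpoint secure: it has a finite midpoint blocking set. -/
def MidpointSecure {X : Type*} [MetricSpace X] (x y : X) : Prop :=
  ∃ B : Set X, B.Finite ∧ MidpointBlocks x y B


/-- Reparametrization of a geodesic to a subinterval. -/
theorem geod_reparam {X : Type*} [MetricSpace X] {γ : ℝ → X} {L a b : ℝ}
    (hγ : IsGeodesicWithSpeed γ L) (ha : 0 ≤ a) (hab : a < b) (hb : b ≤ 1) :
    IsGeodesicWithSpeed (fun t => γ (a + t * (b - a))) (L * (b - a)) := by
  obtain ⟨hL, hprop⟩ := hγ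
  refine ⟨mul_pos hL (by linarith), fun t ht => ?_⟩
  have hmem : ∀ s ∈ Set.Icc (0:ℝ) 1, a + s * (b - a) ∈ Set.Icc (0:ℝ) 1 := by
    intro s hs
    constructor
    · nlinarith [hs.1, hs.2]
    · nlinarith [hs.1, hs.2]
  obtain ⟨U, hU, hUprop⟩ := hprop (a + t * (b - a)) (hmem t ht)
  refine ⟨(fun s => a + s * (b - a)) ⁻¹' U, ?_, ?_⟩
  · exact (Continuous.continuousAt (by continuity)).preimage_mem_nhds hU
  · intro s hs s' hs'
    have := hUprop (a + s * (b - a)) ⟨hs.1, hmem s hs.2⟩ (a + s' * (b - a)) ⟨hs'.1, hmem s' hs'.2⟩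
    rw [this]
    have : a + s * (b - a) - (a + s' * (b - a)) = (s - s') * (b - a) := by ring
    rw [this, abs_mul, abs_of_pos (by linarith : (0:ℝ) < b - a)]
    ring
theorem key_blocks {X : Type*} [MetricSpace X] {x y : X} {B : Set X}
    (hB : MidpointBlocks x y B) : Blocks x y (B \ {x, y}) := by
  intro γ hγ h0 h1
  obtain ⟨L, hγL⟩ := hγ
  obtain ⟨hL, hprop⟩ := hγL
  set S : Set ℝ := {t | t ∈ Set.Icc (0:ℝ) 1 ∧ (γ t = x ∨ γ t = y)} with hSdef
  have hSfin : S.Finite := by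
    have h1 : ∀ t ∈ Set.Icc (0:ℝ) 1, ∃ U ∈ nhds t, ((U ∩ Set.Icc 0 1) ∩ S).Finite := by
      intro t ht
      obtain ⟨U, hU, hUp⟩ := hprop t ht
      refine ⟨U, hU, ?_⟩
      have hinj : Set.InjOn γ (U ∩ Set.Icc 0 1) := by
        intro s hs s' hs' hss
        have hd := hUp s hs s' hs'
        rw [hss, dist_self] at hd
        have habs : |s - s'| = 0 :=
          (mul_eq_zero.mp hd.symm).resolve_left (ne_of_gt hL)
        have := abs_eq_zero.mp habs
        linarith [this]
      have himg : γ '' ((U ∩ Set.Icc 0 1) ∩ S) ⊆ {x, y} := by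
        rintro _ ⟨s, ⟨_, hsS⟩, rfl⟩
        rcases hsS.2 with h | h
        · exact Or.inl h
        · exact Or.inr h
      exact Set.Finite.of_finite_image
        (((Set.finite_singleton y).insert x).subset himg)
        (hinj.mono Set.inter_subset_left)
    choose! U hU hUfin using h1
    obtain ⟨F, hFmem, hF⟩ := isCompact_Icc.elim_nhds_subcover U hU
    have hsub : S ⊆ ⋃ t ∈ F, ((U t ∩ Set.Icc 0 1) ∩ S) := by
      intro s hs
      obtain ⟨t, htF, hsU⟩ := Set.mem_iUnion₂.mp (hF hs.1)
      exact Set.mem_iUnion₂.mpr ⟨t, htF, ⟨hsU, hs.1⟩, hs⟩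
    exact Set.Finite.subset
      (F.finite_toSet.biUnion fun t htF => hUfin t (hFmem t htF)) hsub
  have main : ∀ n : ℕ, ∀ a b : ℝ, 0 ≤ a → a < b → b ≤ 1 → γ a = x → γ b = y →
      (S ∩ Set.Ioo a b).ncard ≤ n → ∃ t ∈ Set.Ioo (0:ℝ) 1, γ t ∈ B \ {x, y} := by
    intro n
    induction n with
    | zero =>
      intro a b ha hab hb hax hby hcard
      set m : ℝ := a + (1/2) * (b - a) with hmdef
      have ham : a < m := by rw [hmdef]; linarith
      have hmb : m < b := by rw [hmdef]; linarith
      have hσ := geod_reparam ⟨hL, hprop⟩ ha hab hb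
      have hmB : γ m ∈ B := by
        have := hB (fun t => γ (a + t * (b - a))) ⟨L * (b - a), hσ⟩
          (by simpa using hax) (by show γ (a + 1 * (b - a)) = y; rw [show a + 1 * (b - a) = b by ring]; exact hby)
        simpa [hmdef] using this
      by_cases hxy : γ m ∈ ({x, y} : Set X)
      · exfalso
        have hmS : m ∈ S ∩ Set.Ioo a b := by
          refine ⟨⟨⟨by linarith, by linarith⟩, ?_⟩, ham, hmb⟩
          rcases hxy with h | h
          · exact Or.inl h
          · exact Or.inr h
        have hfin : (S ∩ Set.Ioo a b).Finite := hSfin.inter_of_left _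
        have : (S ∩ Set.Ioo a b).ncard = 0 := Nat.le_zero.mp hcard
        rw [Set.ncard_eq_zero hfin] at this
        rw [this] at hmS
        exact hmS
      · exact ⟨m, ⟨by linarith, by linarith⟩, hmB, hxy⟩
    | succ n ih =>
      intro a b ha hab hb hax hby hcard
      set m : ℝ := a + (1/2) * (b - a) with hmdef
      have ham : a < m := by rw [hmdef]; linarith
      have hmb : m < b := by rw [hmdef]; linarith
      have hσ := geod_reparam ⟨hL, hprop⟩ ha hab hb
      have hmB : γ m ∈ B := by
        have := hB (fun t => γ (a + t * (b - a))) ⟨L * (b - a), hσ⟩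
          (by simpa using hax) (by show γ (a + 1 * (b - a)) = y; rw [show a + 1 * (b - a) = b by ring]; exact hby)
        simpa [hmdef] using this
      by_cases hxy : γ m ∈ ({x, y} : Set X)
      · have hmS : m ∈ S ∩ Set.Ioo a b := by
          refine ⟨⟨⟨by linarith, by linarith⟩, ?_⟩, ham, hmb⟩
          rcases hxy with h | h
          · exact Or.inl h
          · exact Or.inr h
        have hfin : (S ∩ Set.Ioo a b).Finite := hSfin.inter_of_left _
        rcases hxy with hmx | hmy
        · -- γ m = x : recurse on [m, b]
          apply ih m b (by linarith) hmb hb hmx hby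
          have hsub : S ∩ Set.Ioo m b ⊆ (S ∩ Set.Ioo a b) \ {m} := by
            rintro t ⟨htS, htm, htb⟩
            exact ⟨⟨htS, by linarith, htb⟩, fun h => by simp at h; linarith [h ▸ htm]⟩
          calc (S ∩ Set.Ioo m b).ncard
              ≤ ((S ∩ Set.Ioo a b) \ {m}).ncard :=
                Set.ncard_le_ncard hsub hfin.diff
            _ = (S ∩ Set.Ioo a b).ncard - 1 :=
                Set.ncard_diff_singleton_of_mem hmS
            _ ≤ n := by omega
        · -- γ m = y : recurse on [a, m]
          apply ih a m ha ham (by linarith) hax hmy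
          have hsub : S ∩ Set.Ioo a m ⊆ (S ∩ Set.Ioo a b) \ {m} := by
            rintro t ⟨htS, hta, htm⟩
            exact ⟨⟨htS, hta, by linarith⟩, fun h => by simp at h; linarith [h ▸ htm]⟩
          calc (S ∩ Set.Ioo a m).ncard
              ≤ ((S ∩ Set.Ioo a b) \ {m}).ncard :=
                Set.ncard_le_ncard hsub hfin.diff
            _ = (S ∩ Set.Ioo a b).ncard - 1 :=
                Set.ncard_diff_singleton_of_mem hmS
            _ ≤ n := by omega
      · exact ⟨m, ⟨by linarith, by linarith⟩, hmB, hxy⟩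
  exact main (S ∩ Set.Ioo 0 1).ncard 0 1 le_rfl one_pos le_rfl h0 h1 le_rfl

/-- A midpoint secure configuration is secure; moreover `B \ {x, y}` is a blocking set
whenever `B` is a finite midpoint blocking set. -/
theorem stmt2 {X : Type*} [MetricSpace X] (x y : X) (B : Set X)
    (hBfin : B.Finite) (hB : MidpointBlocks x y B) :
    Secure x y ∧ Blocks x y (B \ {x, y}) := by
  have hblocks := key_blocks hB
  exact ⟨⟨B \ {x, y}, hBfin.diff, hblocks⟩, hblocks⟩
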